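/- Response model error for a myopic follower. Let r, r̃ : B → ℝ and suppose B_A > 0 satisfies ‖A_r‖_∞ ≤ B_A and ‖A_{r̃}‖_∞ ≤ B_A. Write ν = ν_r and ν̃ = ν_{r̃}. Then D_TV(ν, ν̃) ≤ η·E_ν[ |(r̃ − r) − E_ν[r̃ − r]| ] + C⁽³⁾·E_ν[ ((r̃ − r) − E_ν[r̃ − r])² ], where C⁽³⁾ = (η²·exp(2ηB_A)/2)·(2 + ηB_A·exp(2ηB_A)). -/

import Mathlib

open Finset

noncomputable section

namespace QSE3

variable {B : Type*} [Fintype B]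

/-- Soft value `V(Q) = η⁻¹ log Σ_b exp(η Q b)`. -/
def softVal (η : ℝ) (Q : B → ℝ) : ℝ := η⁻¹ * Real.log (∑ b, Real.exp (η * Q b))

/-- Advantage `A_Q(b) = Q b − V(Q)`. -/
def adv (η : ℝ) (Q : B → ℝ) (b : B) : ℝ := Q b - softVal η Q

/-- Quantal response `ν_Q(b) = exp(η A_Q(b))`. -/
def qres (η : ℝ) (Q : B → ℝ) (b : B) : ℝ := Real.exp (η * adv η Q b)

/-- Total-variation distance between (densities of) distributions on `B`. -/
def dTV (p q : B → ℝ) : ℝ := (1 / 2) * ∑ b, |p b - q b|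

lemma exp_le_quad_of_nonpos {x : ℝ} (hx : x ≤ 0) : Real.exp x ≤ 1 + x + x ^ 2 / 2 := by
  have hq := Real.quadratic_le_exp_of_nonneg (neg_nonneg.2 hx)
  have h1 : Real.exp x * Real.exp (-x) = 1 := by
    rw [← Real.exp_add]; simp
  have h2 := Real.exp_pos (-x)
  have h3 := Real.exp_pos x
  nlinarith [sq_nonneg x, sq_nonneg (x^2)]

lemma exp_quad_bound (x : ℝ) : Real.exp x - 1 - x ≤ x ^ 2 / 2 * Real.exp |x| := by
  rcases le_or_gt x 0 with hx | hx
  · rw [abs_of_nonpos hx]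
    have h1 := exp_le_quad_of_nonpos hx
    have h2 : (1:ℝ) ≤ Real.exp (-x) := Real.one_le_exp (neg_nonneg.2 hx)
    nlinarith [sq_nonneg x]
  · rw [abs_of_pos hx]
    set f : ℝ → ℝ := fun y => y ^ 2 / 2 * Real.exp y - Real.exp y + 1 + y with hf
    have hd : ∀ y : ℝ, HasDerivAt f (Real.exp y * (y + y ^ 2 / 2 - 1) + 1) y := by
      intro y
      have h1 : HasDerivAt (fun t : ℝ => t ^ 2 / 2) y y := by
        simpa using (hasDerivAt_pow 2 y).div_const 2
      have h2 := (h1.mul (Real.hasDerivAt_exp y)).sub (Real.hasDerivAt_exp y)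
      have h3 := (h2.add_const 1).add (hasDerivAt_id y)
      refine (h3.congr_deriv (by ring)).congr_of_eventuallyEq (Filter.Eventually.of_forall fun t => ?_)
      simp [hf]
    have hmono : MonotoneOn f (Set.Ici (0:ℝ)) := by
      apply monotoneOn_of_deriv_nonneg (convex_Ici 0)
      · exact fun y _ => ((hd y).continuousAt).continuousWithinAt
      · intro y hy
        exact ((hd y).differentiableAt).differentiableWithinAt
      · intro y hy
        rw [(hd y).deriv]
        simp only [Set.mem_Ici, interior_Ici, Set.mem_Ioi] at hy
        have h4 : Real.exp (-y) ≥ 1 - y := by linarith [Real.add_one_le_exp (-y)]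
        have h5 : Real.exp y * Real.exp (-y) = 1 := by rw [← Real.exp_add]; simp
        have h6 := Real.exp_pos y
        nlinarith
    have h0 : f 0 ≤ f x := hmono (Set.self_mem_Ici) (Set.mem_Ici.2 hx.le) hx.le
    simp [hf] at h0
    linarith

lemma qres_eq {B : Type*} [Fintype B] [Nonempty B] {η : ℝ} (hη : η ≠ 0) (Q : B → ℝ) (b : B) :
    qres η Q b = Real.exp (η * Q b) / (∑ b', Real.exp (η * Q b')) := by
  have hZ : (0:ℝ) < ∑ b', Real.exp (η * Q b') :=
    Finset.sum_pos (fun _ _ => Real.exp_pos _) Finset.univ_nonempty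
  unfold qres adv softVal
  rw [mul_sub, ← mul_assoc, mul_inv_cancel₀ hη, one_mul, Real.exp_sub, Real.exp_log hZ]

lemma sum_qres {B : Type*} [Fintype B] [Nonempty B] {η : ℝ} (hη : η ≠ 0) (Q : B → ℝ) :
    ∑ b, qres η Q b = 1 := by
  have hZ : (0:ℝ) < ∑ b', Real.exp (η * Q b') :=
    Finset.sum_pos (fun _ _ => Real.exp_pos _) Finset.univ_nonempty
  rw [Finset.sum_congr rfl (fun b _ => qres_eq hη Q b), ← Finset.sum_div,
    div_self (ne_of_gt hZ)]


set_option maxHeartbeats 1000000 in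
/-- Response model error for a myopic follower: with `ν = ν_r`,
`D_TV(ν_r, ν_{r̃}) ≤ η·E_ν[|(r̃−r) − E_ν[r̃−r]|] + C⁽³⁾·E_ν[((r̃−r) − E_ν[r̃−r])²]`,
where `C⁽³⁾ = (η² exp(2ηB_A)/2)(2 + ηB_A exp(2ηB_A))`. -/
theorem response_model_error_myopic
    {B : Type*} [Fintype B] [Nonempty B]
    (η : ℝ) (hη : 0 < η) (r rt : B → ℝ) (BA : ℝ) (hBA : 0 < BA)
    (hA : ∀ b, |adv η r b| ≤ BA) (hAt : ∀ b, |adv η rt b| ≤ BA) :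
    dTV (qres η r) (qres η rt) ≤
      η * (∑ b, qres η r b * |(rt b - r b) - ∑ b', qres η r b' * (rt b' - r b')|) +
        (η ^ 2 * Real.exp (2 * η * BA) / 2) * (2 + η * BA * Real.exp (2 * η * BA)) *
          (∑ b, qres η r b * ((rt b - r b) - ∑ b', qres η r b' * (rt b' - r b')) ^ 2) := by
  have hη0 : η ≠ 0 := ne_of_gt hη
  have hν1 : ∑ b, qres η r b = 1 := sum_qres hη0 r
  have hνpos : ∀ b, (0:ℝ) < qres η r b := fun b => Real.exp_pos _
  set m := ∑ b', qres η r b' * (rt b' - r b') with hm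
  set u : B → ℝ := fun b => rt b - r b - m with hu
  set S := ∑ b, qres η r b * Real.exp (η * u b) with hS
  set c := softVal η rt - softVal η r - m with hcdef
  have hgoal_eq : ∀ b, rt b - r b - m = u b := fun b => rfl
  clear_value m u S c
  -- sum of ν u is zero
  have hsum_u : ∑ b, qres η r b * u b = 0 := by
    have h1 : ∀ b, qres η r b * u b
        = qres η r b * (rt b - r b) - qres η r b * m := fun b => by
      simp only [hu]; ring
    rw [Finset.sum_congr rfl (fun b _ => h1 b), Finset.sum_sub_distrib, ← Finset.sum_mul,
      hν1, ← hm, one_mul, sub_self]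
  -- S ≥ 1
  have hS1 : (1:ℝ) ≤ S := by
    have h1 : (1:ℝ) = ∑ b, qres η r b * (1 + η * u b) := by
      have h2 : ∀ b, qres η r b * (1 + η * u b)
          = qres η r b + η * (qres η r b * u b) := fun b => by ring
      rw [Finset.sum_congr rfl (fun b _ => h2 b), Finset.sum_add_distrib, ← Finset.mul_sum,
        hν1, hsum_u, mul_zero, add_zero]
    rw [h1, hS]
    apply Finset.sum_le_sum
    intro b _
    have h3 := Real.add_one_le_exp (η * u b)
    nlinarith [hνpos b]
  have hSpos : (0:ℝ) < S := lt_of_lt_of_le zero_lt_one hS1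
  -- ratio identity
  have hratio : ∀ b, qres η rt b
      = qres η r b * Real.exp (η * (adv η rt b - adv η r b)) := by
    intro b
    unfold qres
    rw [← Real.exp_add]
    congr 1
    ring
  have hc : ∀ b, η * u b = η * (adv η rt b - adv η r b) + η * c := by
    intro b
    simp only [hu, hcdef, adv]
    ring
  -- exp (η c) = S
  have hexpc : Real.exp (η * c) = S := by
    have h2 : ∑ b, qres η r b * Real.exp (η * (adv η rt b - adv η r b)) = 1 := by
      rw [Finset.sum_congr rfl (fun b _ => (hratio b).symm), sum_qres hη0 rt]
    calc Real.exp (η * c)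
        = (∑ b, qres η r b * Real.exp (η * (adv η rt b - adv η r b))) * Real.exp (η * c) := by
          rw [h2, one_mul]
      _ = ∑ b, qres η r b * Real.exp (η * u b) := by
          rw [Finset.sum_mul]
          apply Finset.sum_congr rfl
          intro b _
          rw [hc b, Real.exp_add]
          ring
      _ = S := hS.symm
  have hcnn : 0 ≤ c := by
    have h1 : (1:ℝ) ≤ Real.exp (η * c) := by rw [hexpc]; exact hS1
    have h2 : 0 ≤ η * c := Real.one_le_exp_iff.mp h1
    nlinarith
  -- formula for qres rt
  have hqt : ∀ b, qres η rt b = qres η r b * Real.exp (η * u b) / S := by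
    intro b
    rw [hratio b, show η * u b = η * (adv η rt b - adv η r b) + η * c from hc b,
      Real.exp_add, hexpc]
    field_simp
  -- exponential bound
  have hexpu : ∀ b, Real.exp |η * u b| ≤ Real.exp (2 * η * BA) * S := by
    intro b
    rw [← hexpc, ← Real.exp_add]
    apply Real.exp_le_exp.2
    calc |η * u b| = |η * (adv η rt b - adv η r b) + η * c| := by rw [hc b]
      _ ≤ |η * (adv η rt b - adv η r b)| + |η * c| := abs_add_le _ _
      _ ≤ 2 * η * BA + η * c := by
          rw [abs_mul, abs_mul, abs_of_pos hη, abs_of_nonneg hcnn]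
          have h1 := abs_sub (adv η rt b) (adv η r b)
          have h2 := hA b
          have h3 := hAt b
          nlinarith
  -- sum of ν E = S - 1
  have hEsum : ∑ b, qres η r b * (Real.exp (η * u b) - 1 - η * u b) = S - 1 := by
    have h1 : ∀ b, qres η r b * (Real.exp (η * u b) - 1 - η * u b)
        = qres η r b * Real.exp (η * u b) - qres η r b - η * (qres η r b * u b) :=
      fun b => by ring
    rw [Finset.sum_congr rfl (fun b _ => h1 b), Finset.sum_sub_distrib, Finset.sum_sub_distrib,
      ← Finset.mul_sum, ← hS, hν1, hsum_u, mul_zero, sub_zero]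
  -- pointwise quadratic bound on E
  have hEle : ∀ b, Real.exp (η * u b) - 1 - η * u b
      ≤ (η ^ 2 * Real.exp (2 * η * BA) / 2 * S) * u b ^ 2 := by
    intro b
    have h1 := exp_quad_bound (η * u b)
    have h2 := hexpu b
    have h3 : (η * u b) ^ 2 / 2 * Real.exp |η * u b|
        ≤ (η * u b) ^ 2 / 2 * (Real.exp (2 * η * BA) * S) := by
      apply mul_le_mul_of_nonneg_left h2 (by positivity)
    calc Real.exp (η * u b) - 1 - η * u b ≤ (η * u b) ^ 2 / 2 * Real.exp |η * u b| := h1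
      _ ≤ (η * u b) ^ 2 / 2 * (Real.exp (2 * η * BA) * S) := h3
      _ = (η ^ 2 * Real.exp (2 * η * BA) / 2 * S) * u b ^ 2 := by ring
  -- pointwise bound on |ν - νt|
  have hstep : ∀ b, |qres η r b - qres η rt b|
      ≤ (qres η r b * ((S - 1) + η * |u b| + (Real.exp (η * u b) - 1 - η * u b))) / S := by
    intro b
    rw [hqt b]
    have hp := hνpos b
    have heq : qres η r b - qres η r b * Real.exp (η * u b) / S
        = (qres η r b * ((S - 1) - η * u b - (Real.exp (η * u b) - 1 - η * u b))) / S := by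
      field_simp
      ring
    rw [heq, abs_div, abs_of_pos hSpos, div_le_div_iff_of_pos_right hSpos,
      abs_mul, abs_of_pos hp]
    apply mul_le_mul_of_nonneg_left ?_ hp.le
    have hEnn : 0 ≤ Real.exp (η * u b) - 1 - η * u b := by
      nlinarith [Real.add_one_le_exp (η * u b)]
    have h1 := abs_sub ((S - 1) - η * u b) (Real.exp (η * u b) - 1 - η * u b)
    have h2 := abs_sub (S - 1) (η * u b)
    rw [abs_of_nonneg (by linarith : (0:ℝ) ≤ S - 1), abs_of_nonneg hEnn] at *
    rw [abs_mul, abs_of_pos hη] at *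
    linarith
  -- main summation bound
  have hkey : ∑ b, |qres η r b - qres η rt b|
      ≤ ((S - 1) + η * (∑ b, qres η r b * |u b|) + (S - 1)) / S := by
    calc ∑ b, |qres η r b - qres η rt b|
        ≤ ∑ b, (qres η r b * ((S - 1) + η * |u b|
            + (Real.exp (η * u b) - 1 - η * u b))) / S :=
          Finset.sum_le_sum (fun b _ => hstep b)
      _ = (∑ b, qres η r b * ((S - 1) + η * |u b|
            + (Real.exp (η * u b) - 1 - η * u b))) / S := by rw [Finset.sum_div]
      _ = ((S - 1) + η * (∑ b, qres η r b * |u b|) + (S - 1)) / S := by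
          have h1 : ∀ b, qres η r b * ((S - 1) + η * |u b|
              + (Real.exp (η * u b) - 1 - η * u b))
              = (S - 1) * qres η r b + η * (qres η r b * |u b|)
                + qres η r b * (Real.exp (η * u b) - 1 - η * u b) := fun b => by ring
          rw [Finset.sum_congr rfl (fun b _ => h1 b), Finset.sum_add_distrib,
            Finset.sum_add_distrib, ← Finset.mul_sum, ← Finset.mul_sum, hν1, hEsum, mul_one]
  -- T2 bound on S - 1
  have hT2b : S - 1 ≤ (η ^ 2 * Real.exp (2 * η * BA) / 2 * S) * ∑ b, qres η r b * u b ^ 2 := by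
    rw [← hEsum, Finset.mul_sum]
    apply Finset.sum_le_sum
    intro b _
    have h1 := hEle b
    have h2 := (hνpos b).le
    calc qres η r b * (Real.exp (η * u b) - 1 - η * u b)
        ≤ qres η r b * ((η ^ 2 * Real.exp (2 * η * BA) / 2 * S) * u b ^ 2) :=
          mul_le_mul_of_nonneg_left h1 h2
      _ = η ^ 2 * Real.exp (2 * η * BA) / 2 * S * (qres η r b * u b ^ 2) := by ring
  -- final arithmetic
  show (1 / 2) * ∑ b, |qres η r b - qres η rt b| ≤ _
  simp only [hgoal_eq]
  set T1 := ∑ b, qres η r b * |u b| with hT1def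
  set T2 := ∑ b, qres η r b * u b ^ 2 with hT2def
  clear_value T1 T2
  have hT1nn : 0 ≤ T1 := by
    rw [hT1def]
    exact Finset.sum_nonneg fun b _ => mul_nonneg (hνpos b).le (abs_nonneg _)
  have hT2nn : 0 ≤ T2 := by
    rw [hT2def]
    exact Finset.sum_nonneg fun b _ => mul_nonneg (hνpos b).le (sq_nonneg _)
  set A := ∑ b, |qres η r b - qres η rt b| with hAdef
  set e := Real.exp (2 * η * BA) with hedef
  clear_value A e
  have hAnn : 0 ≤ A := by
    rw [hAdef]
    exact Finset.sum_nonneg fun b _ => abs_nonneg _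
  have hepos : (0:ℝ) < e := by rw [hedef]; exact Real.exp_pos _
  have h3 : S * A ≤ S * (2 * (η ^ 2 * e / 2) * T2 + η * T1) := by
    have h4 : A ≤ ((S - 1) + η * T1 + (S - 1)) / S := hkey
    have h5 : S * A ≤ (S - 1) + η * T1 + (S - 1) := (le_div_iff₀' hSpos).mp h4
    nlinarith [hT2b, hT1nn, hT2nn, hS1, hepos, sq_nonneg η,
      mul_nonneg (mul_nonneg hη.le hT1nn) (sub_nonneg.2 hS1)]
  have h4 : A ≤ 2 * (η ^ 2 * e / 2) * T2 + η * T1 :=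
    le_of_mul_le_mul_left h3 hSpos
  have hC : η ^ 2 * e / 2 ≤ η ^ 2 * e / 2 * (2 + η * BA * e) := by
    nlinarith [mul_nonneg (mul_nonneg (sq_nonneg η) hepos.le)
      (mul_nonneg (mul_nonneg hη.le hBA.le) hepos.le),
      mul_nonneg (sq_nonneg η) hepos.le]
  nlinarith [h4, hT1nn, hT2nn, hη, mul_le_mul_of_nonneg_right hC hT2nn,
    mul_nonneg hη.le hT1nn]


end QSE3
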